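/- Suppose Pmax·∑_k b_k ≥ η. Consider the relaxed problem obtained from (P1) by replacing the constraint α > 0 with α ≥ 0. Then the minimum of f over this closed feasible set is attained, and every minimizer (p*, α*) satisfies α* ≤ max{ 1/(Pmax·min_k h_k²), K/σ² }. -/

import Mathlib

open Finset

/-- Objective of problem (P1). -/
noncomputable def objP1 (K : ℕ) (h : Fin K → ℝ) (σ2 : ℝ)
    (p : Fin K → ℝ) (α : ℝ) : ℝ :=
  α * (σ2 + ∑ k, (h k) ^ 2 * p k) - 2 * ∑ k, h k * Real.sqrt (α * p k)

/-- Feasibility for the relaxed problem (P1) where `α > 0` is replaced by `α ≥ 0`. -/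
def FeasP1Relaxed (K : ℕ) (b : Fin K → ℝ) (η Pmax : ℝ)
    (p : Fin K → ℝ) (α : ℝ) : Prop :=
  (∑ k, b k * p k) ≥ η ∧ (∀ k, 0 ≤ p k ∧ p k ≤ Pmax) ∧ 0 ≤ α

/-- Rewriting of the objective in terms of `√β`. -/
lemma objP1_eq (K : ℕ) (h : Fin K → ℝ) (σ2 : ℝ) (p : Fin K → ℝ) (β : ℝ)
    (hβ : 0 ≤ β) :
    objP1 K h σ2 p β = (σ2 + ∑ k, (h k) ^ 2 * p k) * β
      - 2 * (∑ k, h k * Real.sqrt (p k)) * Real.sqrt β := by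
  unfold objP1
  have h1 : ∀ k : Fin K, Real.sqrt (β * p k) = Real.sqrt β * Real.sqrt (p k) :=
    fun k => Real.sqrt_mul hβ _
  simp_rw [h1]
  have h2 : ∑ k, h k * (Real.sqrt β * Real.sqrt (p k))
      = Real.sqrt β * ∑ k, h k * Real.sqrt (p k) := by
    rw [Finset.mul_sum]; congr 1; ext k; ring
  rw [h2]; ring

/-- Cauchy–Schwarz bound on `B`. -/
lemma B_sq_le (K : ℕ) (h : Fin K → ℝ) (p : Fin K → ℝ) (hp : ∀ k, 0 ≤ p k) :
    (∑ k, h k * Real.sqrt (p k)) ^ 2 ≤ (K : ℝ) * ∑ k, (h k) ^ 2 * p k := by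
  have key := Finset.sum_mul_sq_le_sq_mul_sq Finset.univ (fun _ : Fin K => (1 : ℝ))
    (fun k => h k * Real.sqrt (p k))
  simp only [one_mul, one_pow, mul_one, Finset.sum_const, Finset.card_univ,
    Fintype.card_fin, nsmul_eq_mul] at key
  calc (∑ k, h k * Real.sqrt (p k)) ^ 2
      ≤ (K : ℝ) * ∑ k, (h k * Real.sqrt (p k)) ^ 2 := key
    _ = (K : ℝ) * ∑ k, (h k) ^ 2 * p k := by
        congr 1; apply Finset.sum_congr rfl; intro k _
        rw [mul_pow, Real.sq_sqrt (hp k)]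

/-- The candidate optimal `α` for a fixed `p` is bounded by `K/σ2`. -/
lemma alpha_star_le (K : ℕ) (h : Fin K → ℝ) (σ2 : ℝ) (hσ : 0 < σ2)
    (p : Fin K → ℝ) (hp : ∀ k, 0 ≤ p k) :
    ((∑ k, h k * Real.sqrt (p k)) / (σ2 + ∑ k, (h k) ^ 2 * p k)) ^ 2
      ≤ (K : ℝ) / σ2 := by
  set S := ∑ k, (h k) ^ 2 * p k with hS
  set B := ∑ k, h k * Real.sqrt (p k) with hB
  have hSnn : 0 ≤ S := Finset.sum_nonneg fun k _ => mul_nonneg (sq_nonneg _) (hp k)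
  have hA : 0 < σ2 + S := by linarith
  have hCS : B ^ 2 ≤ (K : ℝ) * S := B_sq_le K h p hp
  rw [div_pow, div_le_div_iff₀ (by positivity) hσ]
  have h1 : B ^ 2 * σ2 ≤ (K : ℝ) * S * σ2 := by nlinarith [hCS, hσ]
  have h2 : (K : ℝ) * S * σ2 ≤ (K : ℝ) * (σ2 + S) ^ 2 := by
    nlinarith [mul_nonneg (Nat.cast_nonneg (α := ℝ) K)
      (show (0:ℝ) ≤ σ2 ^ 2 + σ2 * S + S ^ 2 by positivity)]
  linarith

/-- The objective at the candidate optimal `α` is a lower bound over all `β ≥ 0`. -/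
lemma obj_ge (K : ℕ) (h : Fin K → ℝ) (σ2 : ℝ) (hσ : 0 < σ2) (hh : ∀ k, 0 < h k)
    (p : Fin K → ℝ) (hp : ∀ k, 0 ≤ p k) (β : ℝ) (hβ : 0 ≤ β) :
    objP1 K h σ2 p
        (((∑ k, h k * Real.sqrt (p k)) / (σ2 + ∑ k, (h k) ^ 2 * p k)) ^ 2)
      ≤ objP1 K h σ2 p β := by
  set S := ∑ k, (h k) ^ 2 * p k with hS
  set B := ∑ k, h k * Real.sqrt (p k) with hB
  have hSnn : 0 ≤ S := Finset.sum_nonneg fun k _ => mul_nonneg (sq_nonneg _) (hp k)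
  have hA : 0 < σ2 + S := by linarith
  have hBnn : 0 ≤ B := Finset.sum_nonneg fun k _ =>
    mul_nonneg (hh k).le (Real.sqrt_nonneg _)
  set s := B / (σ2 + S) with hs
  have hsnn : 0 ≤ s := div_nonneg hBnn hA.le
  rw [objP1_eq K h σ2 p (s ^ 2) (sq_nonneg s), objP1_eq K h σ2 p β hβ]
  rw [Real.sqrt_sq hsnn]
  simp only [← hS, ← hB]
  have hLHS : (σ2 + S) * s ^ 2 - 2 * B * s = -(B ^ 2 / (σ2 + S)) := by
    rw [hs]; field_simp; ring
  rw [hLHS]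
  set t := Real.sqrt β with ht'
  have ht : t ^ 2 = β := Real.sq_sqrt hβ
  have hdiv : (σ2 + S) * (B ^ 2 / (σ2 + S)) = B ^ 2 := mul_div_cancel₀ _ hA.ne'
  have key : 0 ≤ (σ2 + S) * ((σ2 + S) * β - 2 * B * t + B ^ 2 / (σ2 + S)) := by
    have e : (σ2 + S) * ((σ2 + S) * β - 2 * B * t + B ^ 2 / (σ2 + S))
        = ((σ2 + S) * t - B) ^ 2 := by
      rw [mul_add, hdiv, ← ht]; ring
    rw [e]; exact sq_nonneg _
  have h3 : 0 ≤ (σ2 + S) * β - 2 * B * t + B ^ 2 / (σ2 + S) :=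
    le_of_mul_le_mul_left (by linarith) hA
  linarith

theorem stmt_2 (K : ℕ) (hK : 0 < K) (h b : Fin K → ℝ)
    (hh : ∀ k, 0 < h k) (hb : ∀ k, 0 < b k)
    (σ2 η Pmax : ℝ) (hσ : 0 < σ2) (hη : 0 < η) (hP : 0 < Pmax)
    (hfeas : Pmax * ∑ k, b k ≥ η) :
    (∃ (p : Fin K → ℝ) (α : ℝ), FeasP1Relaxed K b η Pmax p α ∧
      ∀ (q : Fin K → ℝ) (β : ℝ), FeasP1Relaxed K b η Pmax q β →
        objP1 K h σ2 p α ≤ objP1 K h σ2 q β) ∧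
    (∀ (p : Fin K → ℝ) (α : ℝ), FeasP1Relaxed K b η Pmax p α →
      (∀ (q : Fin K → ℝ) (β : ℝ), FeasP1Relaxed K b η Pmax q β →
        objP1 K h σ2 p α ≤ objP1 K h σ2 q β) →
      α ≤ max (1 / (Pmax * Finset.univ.inf' ⟨⟨0, hK⟩, Finset.mem_univ _⟩
                      (fun k => (h k) ^ 2)))
              ((K : ℝ) / σ2)) := by
  set M : ℝ := (K : ℝ) / σ2 with hM
  have hMnn : 0 ≤ M := by positivity
  set F : (Fin K → ℝ) × ℝ → ℝ := fun x => objP1 K h σ2 x.1 x.2 with hF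
  have hFc : Continuous F := by
    apply Continuous.sub
    · exact continuous_snd.mul (continuous_const.add (continuous_finset_sum _
        fun k _ => continuous_const.mul ((continuous_apply k).comp continuous_fst)))
    · exact continuous_const.mul (continuous_finset_sum _ fun k _ =>
        continuous_const.mul (Real.continuous_sqrt.comp
          (continuous_snd.mul ((continuous_apply k).comp continuous_fst))))
  set C : Set ((Fin K → ℝ) × ℝ) :=
    {x | FeasP1Relaxed K b η Pmax x.1 x.2 ∧ x.2 ≤ M} with hC
  have hCclosed : IsClosed C := by
    have hCeq : C = {x : (Fin K → ℝ) × ℝ | η ≤ ∑ k, b k * x.1 k} ∩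
        ((⋂ k, {x : (Fin K → ℝ) × ℝ | 0 ≤ x.1 k ∧ x.1 k ≤ Pmax}) ∩
          ({x : (Fin K → ℝ) × ℝ | 0 ≤ x.2} ∩ {x : (Fin K → ℝ) × ℝ | x.2 ≤ M})) := by
      ext x
      simp only [hC, Set.mem_setOf_eq, Set.mem_inter_iff, Set.mem_iInter,
        FeasP1Relaxed, ge_iff_le]
      tauto
    rw [hCeq]
    refine (isClosed_le continuous_const (continuous_finset_sum _
      fun k _ => continuous_const.mul ((continuous_apply k).comp continuous_fst))).inter
      (IsClosed.inter ?_ ?_)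
    · exact isClosed_iInter fun k =>
        (isClosed_le continuous_const ((continuous_apply k).comp continuous_fst)).inter
          (isClosed_le ((continuous_apply k).comp continuous_fst) continuous_const)
    · exact (isClosed_le continuous_const continuous_snd).inter
        (isClosed_le continuous_snd continuous_const)
  have hCcompact : IsCompact C := by
    apply IsCompact.of_isClosed_subset
      ((isCompact_Icc (a := (0 : Fin K → ℝ)) (b := fun _ => Pmax)).prod
        (isCompact_Icc (a := (0 : ℝ)) (b := M))) hCclosed
    rintro x ⟨⟨-, hx2, hx3⟩, hx4⟩
    exact ⟨⟨fun k => (hx2 k).1, fun k => (hx2 k).2⟩, hx3, hx4⟩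
  have hx0 : ((fun _ => Pmax, 0) : (Fin K → ℝ) × ℝ) ∈ C := by
    refine ⟨⟨?_, fun k => ⟨hP.le, le_refl _⟩, le_refl _⟩, hMnn⟩
    simp only
    calc η ≤ Pmax * ∑ k, b k := hfeas
      _ = ∑ k, b k * Pmax := by rw [Finset.mul_sum]; apply Finset.sum_congr rfl;
                                 intro k _; ring
  obtain ⟨x, hxC, hxmin⟩ := hCcompact.exists_isMinOn ⟨_, hx0⟩ hFc.continuousOn
  -- key: any feasible point is dominated by a point of C
  have hdom : ∀ (q : Fin K → ℝ) (β : ℝ), FeasP1Relaxed K b η Pmax q β →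
      ∃ y ∈ C, F y ≤ objP1 K h σ2 q β := by
    intro q β hqβ
    obtain ⟨hq1, hq2, hq3⟩ := hqβ
    have hqnn : ∀ k, 0 ≤ q k := fun k => (hq2 k).1
    refine ⟨(q, ((∑ k, h k * Real.sqrt (q k)) / (σ2 + ∑ k, (h k) ^ 2 * q k)) ^ 2),
      ⟨⟨hq1, hq2, sq_nonneg _⟩, alpha_star_le K h σ2 hσ q hqnn⟩, ?_⟩
    exact obj_ge K h σ2 hσ hh q hqnn β hq3
  constructor
  · refine ⟨x.1, x.2, hxC.1, ?_⟩
    intro q β hqβ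
    obtain ⟨y, hyC, hy⟩ := hdom q β hqβ
    exact le_trans (hxmin hyC) hy
  · intro p α hpα hmin
    refine le_trans ?_ (le_max_right _ _)
    obtain ⟨hp1, hp2, hp3⟩ := hpα
    have hpnn : ∀ k, 0 ≤ p k := fun k => (hp2 k).1
    set S := ∑ k, (h k) ^ 2 * p k with hS
    set B := ∑ k, h k * Real.sqrt (p k) with hB
    have hSnn : 0 ≤ S := Finset.sum_nonneg fun k _ => mul_nonneg (sq_nonneg _) (hpnn k)
    have hA : 0 < σ2 + S := by linarith
    -- minimality over β forces α to equal the vertex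
    have hle : objP1 K h σ2 p α ≤ objP1 K h σ2 p ((B / (σ2 + S)) ^ 2) :=
      hmin p _ ⟨hp1, hp2, sq_nonneg _⟩
    have hBnn : 0 ≤ B := Finset.sum_nonneg fun k _ =>
      mul_nonneg (hh k).le (Real.sqrt_nonneg _)
    have hsnn : 0 ≤ B / (σ2 + S) := div_nonneg hBnn hA.le
    rw [objP1_eq K h σ2 p α hp3, objP1_eq K h σ2 p _ (sq_nonneg _),
      Real.sqrt_sq hsnn] at hle
    simp only [← hS, ← hB] at hle
    have hRHS : (σ2 + S) * (B / (σ2 + S)) ^ 2 - 2 * B * (B / (σ2 + S))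
        = -(B ^ 2 / (σ2 + S)) := by
      field_simp; ring
    rw [hRHS] at hle
    set t := Real.sqrt α with ht'
    have ht : t ^ 2 = α := Real.sq_sqrt hp3
    have hdiv : (σ2 + S) * (B ^ 2 / (σ2 + S)) = B ^ 2 := mul_div_cancel₀ _ hA.ne'
    have hsq : ((σ2 + S) * t - B) ^ 2 ≤ 0 := by
      have e : ((σ2 + S) * t - B) ^ 2
          = (σ2 + S) * ((σ2 + S) * α - 2 * B * t) + B ^ 2 := by rw [← ht]; ring
      have h4 : (σ2 + S) * ((σ2 + S) * α - 2 * B * t)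
          ≤ (σ2 + S) * (-(B ^ 2 / (σ2 + S))) := mul_le_mul_of_nonneg_left hle hA.le
      rw [mul_neg, hdiv] at h4
      rw [e]; linarith
    have hz : (σ2 + S) * t - B = 0 := by
      have := le_antisymm hsq (sq_nonneg _)
      exact pow_eq_zero_iff (n := 2) (by norm_num) |>.mp this
    have htval : t = B / (σ2 + S) := by
      field_simp
      linarith [hz]
    have : α = (B / (σ2 + S)) ^ 2 := by rw [← ht, htval]
    rw [this]
    exact alpha_star_le K h σ2 hσ p hpnn
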